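/- Let x be in the realized stratified simplex over a flag J in a poset P, let q ≤ p in P, and suppose x satisfies both standard-neighborhood conditions s_{¬≤q}(x) ≤ s_q(x) and s_{¬≤p}(x) ≤ s_p(x). Then the retracted point ρᵖ(x) (rescaling of the coordinates at labels ≤ p, which is well-defined since s_{≤p}(x) ≥ 1/2) again satisfies s_{¬≤q}(ρᵖ(x)) ≤ s_q(ρᵖ(x)). -/

import Mathlib

noncomputable section
open Finset Classical

/-- Membership in the standard `n`-simplex: nonnegative coordinates summing to `1`. -/
def IsSimplexPt {n : ℕ} (x : Fin (n + 1) → ℝ) : Prop :=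
  (∀ i, 0 ≤ x i) ∧ ∑ i, x i = 1

/-- `s_p(x)`: sum of the coordinates of `x` at vertices labeled `p`. -/
def sEq {n : ℕ} {P : Type*} [PartialOrder P] (L : Fin (n + 1) → P) (p : P)
    (x : Fin (n + 1) → ℝ) : ℝ :=
  ∑ i ∈ Finset.univ.filter (fun i => L i = p), x i

/-- `s_{≤p}(x)`: sum of the coordinates of `x` at vertices with label `≤ p`. -/
def sLe {n : ℕ} {P : Type*} [PartialOrder P] (L : Fin (n + 1) → P) (p : P)
    (x : Fin (n + 1) → ℝ) : ℝ :=
  ∑ i ∈ Finset.univ.filter (fun i => L i ≤ p), x i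

/-- `s_{¬≤p}(x)`: sum of the coordinates of `x` at vertices whose label is not `≤ p`. -/
def sNotLe {n : ℕ} {P : Type*} [PartialOrder P] (L : Fin (n + 1) → P) (p : P)
    (x : Fin (n + 1) → ℝ) : ℝ :=
  ∑ i ∈ Finset.univ.filter (fun i => ¬ L i ≤ p), x i

/-- `s_{¬<p}(x)`: sum of the coordinates of `x` at vertices whose label is not `< p`. -/
def sNotLt {n : ℕ} {P : Type*} [PartialOrder P] (L : Fin (n + 1) → P) (p : P)
    (x : Fin (n + 1) → ℝ) : ℝ :=
  ∑ i ∈ Finset.univ.filter (fun i => ¬ L i < p), x i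

/-- The stratification of the realized simplex with monotone vertex labels `L`:
`stratOf L x = max {L i : x i > 0}`, computed as the label of the largest index with
positive coordinate (for `x` in the simplex this is the supremum of the labels of the
positive coordinates, since `L` is monotone). -/
def stratOf {n : ℕ} {P : Type*} [PartialOrder P] (L : Fin (n + 1) → P)
    (x : Fin (n + 1) → ℝ) : P :=
  L ((Finset.univ.filter (fun i => 0 < x i)).sup id)

/-- The retraction `ρᵖ` onto the face of labels `≤ p`: rescale the coordinates at
vertices with label `≤ p` by `1 / s_{≤p}(x)` and set all other coordinates to `0`. -/
def rho {n : ℕ} {P : Type*} [PartialOrder P] (L : Fin (n + 1) → P) (p : P)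
    (x : Fin (n + 1) → ℝ) : Fin (n + 1) → ℝ :=
  fun i => if L i ≤ p then x i / sLe L p x else 0
/-- Let `x` be in the realized stratified simplex over a flag `L`, let `q ≤ p`, and
suppose `x` satisfies the standard-neighborhood conditions `s_{¬≤q}(x) ≤ s_q(x)` and
`s_{¬≤p}(x) ≤ s_p(x)`. Then the retracted point `ρᵖ(x)` again satisfies
`s_{¬≤q}(ρᵖ(x)) ≤ s_q(ρᵖ(x))`. -/
theorem rho_preserves_standardNhd {n : ℕ} {P : Type*} [PartialOrder P]
    (L : Fin (n + 1) → P) (hL : Monotone L) (p q : P) (hqp : q ≤ p)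
    (x : Fin (n + 1) → ℝ) (hx : IsSimplexPt x)
    (hq : sNotLe L q x ≤ sEq L q x) (hp : sNotLe L p x ≤ sEq L p x) :
    sNotLe L q (rho L p x) ≤ sEq L q (rho L p x) := by
  obtain ⟨hx0, hx1⟩ := hx
  set s := sLe L p x with hs_def
  have hsum : s + sNotLe L p x = 1 := by
    rw [hs_def, sLe, sNotLe, Finset.sum_filter_add_sum_filter_not, hx1]
  have hEqLe : sEq L p x ≤ s := by
    apply Finset.sum_le_sum_of_subset_of_nonneg
    · intro i hi
      simp only [Finset.mem_filter, Finset.mem_univ, true_and] at hi ⊢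
      exact hi.le
    · intro i _ _; exact hx0 i
  have hs : 0 < s := by linarith
  have h1 : sEq L q (rho L p x) = sEq L q x / s := by
    rw [sEq, sEq, Finset.sum_div]
    apply Finset.sum_congr rfl
    intro i hi
    simp only [Finset.mem_filter, Finset.mem_univ, true_and] at hi
    simp [rho, hi.le.trans hqp, hs_def]
  have h2 : sNotLe L q (rho L p x) ≤ sNotLe L q x / s := by
    rw [sNotLe, sNotLe, Finset.sum_div]
    apply Finset.sum_le_sum
    intro i _
    by_cases h : L i ≤ p
    · simp [rho, h, hs_def]
    · simp only [rho, h, if_false]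
      exact div_nonneg (hx0 i) hs.le
  have h3 : sNotLe L q x / s ≤ sEq L q x / s :=
    by gcongr
  rw [h1]
  exact h2.trans h3

end
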